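/- The consent rule f^{(1,1)} is immune to group control by deleting individuals: if S ⊆ N and S ⊄ f^{(1,1)}(φ,N), then for every U ⊆ N \ S we have S ⊄ f^{(1,1)}(φ, N \ U). -/

import Mathlib

open Finset

variable {N : Type*} [DecidableEq N] [Fintype N]

/-- Consent rule `f^{(s,t)}`: `a ∈ T` with `φ a a = 1` is socially qualified iff at least
`s` members of `T` qualify her; `a` with `φ a a = 0` is socially qualified iff fewer than
`t` members of `T` disqualify her. -/
def consent (s t : ℕ) (φ : N → N → Bool) (T : Finset N) : Finset N :=
  T.filter (fun a =>
    if φ a a = true then s ≤ (T.filter (fun b => φ b a = true)).card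
    else (T.filter (fun b => φ b a = false)).card < t)

/-- One expansion step: add every member of `T` qualified by someone currently included. -/
def qstep (φ : N → N → Bool) (T K : Finset N) : Finset N :=
  K ∪ T.filter (fun a => ∃ b ∈ K, φ b a = true)

/-- Initial set for the liberal-start-respecting rule. -/
def K0L (φ : N → N → Bool) (T : Finset N) : Finset N :=
  T.filter (fun a => φ a a = true)

/-- Initial set for the consensus-start-respecting rule. -/
def K0C (φ : N → N → Bool) (T : Finset N) : Finset N :=
  T.filter (fun a => ∀ b ∈ T, φ b a = true)

/-- Liberal-start-respecting rule (fixed point reached after `T.card` steps). -/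
def fLSR (φ : N → N → Bool) (T : Finset N) : Finset N :=
  (qstep φ T)^[T.card] (K0L φ T)

/-- Consensus-start-respecting rule (fixed point reached after `T.card` steps). -/
def fCSR (φ : N → N → Bool) (T : Finset N) : Finset N :=
  (qstep φ T)^[T.card] (K0C φ T)

theorem stmt2 (φ : N → N → Bool) (S U : Finset N)
    (hS : ¬ S ⊆ consent 1 1 φ Finset.univ) (hU : U ⊆ Finset.univ \ S) :
    ¬ S ⊆ consent 1 1 φ (Finset.univ \ U) := by
  have key : ∀ (T : Finset N) (a : N), a ∈ consent 1 1 φ T ↔ a ∈ T ∧ φ a a = true := by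
    intro T a
    simp only [consent, mem_filter]
    constructor
    · rintro ⟨ha, h⟩
      refine ⟨ha, ?_⟩
      by_contra hf
      simp only [hf, if_neg] at h
      simp at h
      have : a ∈ T.filter (fun b => φ b a = false) := by
        simp [ha, Bool.not_eq_true] at hf ⊢; exact hf
      exact hf (h ha)
    · rintro ⟨ha, ht⟩
      refine ⟨ha, ?_⟩
      rw [if_pos ht]
      refine Finset.card_pos.mpr ⟨a, ?_⟩
      simp [ha, ht]
  intro h
  apply hS
  intro a haS
  have ha := h haS
  rw [key] at ha
  rw [key]
  exact ⟨mem_univ a, ha.2⟩
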